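/- arXiv:2305.19646 — 4 statements merged into one kernel-verified Lean document; each statement's English description precedes it below -/
import Mathlib

section
/- Every function $f \colon 2^\omega \to \omega_1$ (where every subset of $2^\omega$ is assumed Lebesgue measurable) is constant on a set of positive Lebesgue measure. More precisely: if $f \colon 2^\omega \to \omega_1$ is a function such that for every countable set $A \subseteq \omega_1$ the preimage $f^{-1}(A)$ is Lebesgue measurable, and additionally the set $\{(x,y) \mid f(x) \le f(y)\}$ is measurable in the product measure, then there exists $\alpha \in \omega_1$ with $\lambda(f^{-1}(\alpha)) > 0$. -/
open MeasureTheory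

/-- Every function from Cantor space to `ω₁` (with the stated
measurability assumptions) is constant on a set of positive Lebesgue
(coin-flipping) measure. -/
theorem stmt5 (μ : Measure (ℕ → Bool)) [IsProbabilityMeasure μ]
    (hμ : ∀ σ : List Bool,
      μ {x : ℕ → Bool | ∀ i : Fin σ.length, x i = σ.get i}
        = (1 / 2 : ENNReal) ^ σ.length)
    (f : (ℕ → Bool) → Ordinal.{0})
    (hf : ∀ x, f x < (Cardinal.aleph 1).ord)
    (hmeas : ∀ A : Set Ordinal.{0}, A.Countable → MeasurableSet (f ⁻¹' A))
    (hB : MeasurableSet {p : (ℕ → Bool) × (ℕ → Bool) | f p.1 ≤ f p.2}) :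
    ∃ α < (Cardinal.aleph 1).ord, 0 < μ (f ⁻¹' {α}) := by
  by_contra h
  push_neg at h
  have hnull : ∀ α, α < (Cardinal.aleph 1).ord → μ (f ⁻¹' {α}) = 0 := by
    intro α hα
    exact le_antisymm (h α hα) zero_le
  -- countability of initial segments
  have hcnt : ∀ o : Ordinal.{0}, o < (Cardinal.aleph 1).ord → (Set.Iic o).Countable := by
    intro o ho
    have hsucc : Order.succ o < (Cardinal.aleph 1).ord :=
      (Cardinal.isSuccLimit_ord (Cardinal.aleph0_le_aleph 1)).succ_lt ho
    have hcard : (Order.succ o).card < Cardinal.aleph 1 := Cardinal.lt_ord.mp hsucc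
    rw [Cardinal.countable_iff_lt_aleph_one, ← Order.Iio_succ, Ordinal.mk_Iio_ordinal]
    have : Cardinal.lift.{1} (Order.succ o).card < Cardinal.lift.{1} (Cardinal.aleph 1) :=
      Cardinal.lift_lt.mpr hcard
    rwa [Cardinal.lift_aleph, Ordinal.lift_one] at this
  -- every initial segment has null preimage
  have hIic : ∀ o : Ordinal.{0}, o < (Cardinal.aleph 1).ord → μ (f ⁻¹' Set.Iic o) = 0 := by
    intro o ho
    have hU : f ⁻¹' Set.Iic o = ⋃ β ∈ Set.Iic o, f ⁻¹' {β} := by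
      ext x; simp
    rw [hU]
    exact (measure_biUnion_null_iff (hcnt o ho)).mpr
      fun β hβ => hnull β (lt_of_le_of_lt hβ ho)
  have hB0 : (μ.prod μ) {p : (ℕ → Bool) × (ℕ → Bool) | f p.1 ≤ f p.2} = 0 := by
    rw [Measure.prod_apply_symm hB]
    have hsec : ∀ y, μ {a | f a ≤ f y} = 0 := by
      intro y
      have : {a | f a ≤ f y} = f ⁻¹' Set.Iic (f y) := rfl
      rw [this]
      exact hIic (f y) (hf y)
    simp [hsec]
  have hB1 : (μ.prod μ) {p : (ℕ → Bool) × (ℕ → Bool) | f p.1 ≤ f p.2} = 1 := by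
    rw [Measure.prod_apply hB]
    have hsec : ∀ x, μ {a | f x ≤ f a} = 1 := by
      intro x
      have hset : {a | f x ≤ f a} = (f ⁻¹' Set.Iio (f x))ᶜ := by
        ext y; simp [not_lt]
      have hco : (Set.Iio (f x)).Countable :=
        (hcnt (f x) (hf x)).mono Set.Iio_subset_Iic_self
      have hnullIio : μ (f ⁻¹' Set.Iio (f x)) = 0 :=
        measure_mono_null (Set.preimage_mono Set.Iio_subset_Iic_self) (hIic (f x) (hf x))
      rw [hset, measure_compl (hmeas _ hco) (measure_ne_top μ _), hnullIio,
        measure_univ, tsub_zero]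
    simp [hsec]
  rw [hB0] at hB1
  exact zero_ne_one hB1
end

section
/- For every Borel function $f \colon 2^\omega \to 2^\omega$, either the range of $f$ is countable, or the identity function on $2^\omega$ is continuously reducible to $f$; that is, there exist partial continuous functions $\phi, \psi$ on $2^\omega$ such that for all $x \in 2^\omega$, $\psi(f(\phi(x))) = x$. -/
open Set Topology ENNReal Function CantorScheme PiNat



/-- Condensation points: in a second countable space, an uncountable set has uncountably many
points that are condensation points of it. -/
lemma cond_lemma {Y : Type*} [TopologicalSpace Y] [SecondCountableTopology Y] {S : Set Y}
    (hS : ¬ S.Countable) :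
    ¬ (S ∩ {y | ∀ U ∈ 𝓝 y, ¬ (S ∩ U).Countable}).Countable := by
  intro hc
  apply hS
  have hB := TopologicalSpace.isBasis_countableBasis Y
  have hBc := TopologicalSpace.countable_countableBasis Y
  have hsub : S \ {y | ∀ U ∈ 𝓝 y, ¬ (S ∩ U).Countable} ⊆
      ⋃ b ∈ {b ∈ TopologicalSpace.countableBasis Y | (S ∩ b).Countable}, S ∩ b := by
    rintro y ⟨hyS, hyT⟩
    simp only [mem_setOf_eq, not_forall] at hyT
    obtain ⟨U, hU, hUc⟩ := hyT
    push_neg at hUc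
    obtain ⟨b, hb, hyb, hbU⟩ := hB.mem_nhds_iff.1 hU
    exact mem_biUnion ⟨hb, hUc.mono (inter_subset_inter_right _ hbU)⟩ ⟨hyS, hyb⟩
  have : (S \ {y | ∀ U ∈ 𝓝 y, ¬ (S ∩ U).Countable}).Countable :=
    Countable.mono hsub <| (hBc.mono (sep_subset _ _)).biUnion fun b hb => hb.2
  have := hc.union this
  exact this.mono (by intro y hy; by_cases h : y ∈ {y | ∀ U ∈ 𝓝 y, ¬ (S ∩ U).Countable}
                      exacts [Or.inl ⟨hy, h⟩, Or.inr ⟨hy, h⟩])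

lemma split_lemma {X : Type*} [MetricSpace X] [TopologicalSpace.SeparableSpace X]
    {f : X → ℕ → Bool} (hf : Continuous f) {A : Set X} (hA : IsClosed A)
    (hS : ¬ (f '' A).Countable) {ε : ℝ≥0∞} (hε : 0 < ε) :
    ∃ A₀ A₁ : Set X,
      (IsClosed A₀ ∧ ¬ (f '' A₀).Countable ∧ A₀ ⊆ A ∧ EMetric.diam A₀ ≤ ε) ∧
      (IsClosed A₁ ∧ ¬ (f '' A₁).Countable ∧ A₁ ⊆ A ∧ EMetric.diam A₁ ≤ ε) ∧
      Disjoint (f '' A₀) (f '' A₁) := by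
  set S := f '' A with hSdef
  set T := {y | ∀ U ∈ 𝓝 y, ¬ (S ∩ U).Countable} with hTdef
  have hST : ¬ (S ∩ T).Countable := cond_lemma hS
  -- two distinct condensation points
  obtain ⟨y₀, hy₀, y₁, hy₁, hne⟩ : ∃ y₀ ∈ S ∩ T, ∃ y₁ ∈ S ∩ T, y₀ ≠ y₁ := by
    by_contra h
    push_neg at h
    exact hST (Set.Subsingleton.countable fun a ha b hb => by
      by_contra hab; exact hab (h a ha b hb))
  obtain ⟨n, hn⟩ : ∃ n, y₀ n ≠ y₁ n := by
    by_contra h; push_neg at h; exact hne (funext h)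
  -- clopen separating sets
  set U : Bool → Set (ℕ → Bool) := fun b => (fun y : ℕ → Bool => y n) ⁻¹' {b} with hUdef
  have hUopen : ∀ b, IsOpen (U b) := fun b => (continuous_apply n).isOpen_preimage _ trivial
  have hUclosed : ∀ b, IsClosed (U b) := fun b =>
    IsClosed.preimage (continuous_apply n) (isClosed_discrete _)
  have hUdisj : Disjoint (U (y₀ n)) (U (y₁ n)) := by
    rw [Set.disjoint_left]
    intro y h0 h1
    exact hn (h0.symm.trans h1)
  -- dense sequence for shrinking
  haveI : Nonempty X := by
    rcases Set.eq_empty_or_nonempty A with h | ⟨x, -⟩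
    · exact absurd (by simp [h] : (f '' A).Countable) hS
    · exact ⟨x⟩
  obtain ⟨u, hu⟩ := TopologicalSpace.exists_dense_seq X
  have key : ∀ b : Bool, ¬ (S ∩ U b).Countable →
      ∃ B : Set X, IsClosed B ∧ ¬ (f '' B).Countable ∧ B ⊆ A ∧ EMetric.diam B ≤ ε ∧
        f '' B ⊆ U b := by
    intro b hb
    set A' := A ∩ f ⁻¹' (U b) with hA'
    have himg : f '' A' = S ∩ U b := Set.image_inter_preimage f A (U b)
    have hA'c : ¬ (f '' A').Countable := by rw [himg]; exact hb
    have hcover : A' ⊆ ⋃ k, A' ∩ EMetric.closedBall (u k) (ε / 2) := by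
      intro x hx
      have : ∃ k, u k ∈ EMetric.ball x (ε / 2) := by
        have : (EMetric.ball x (ε / 2)).Nonempty := ⟨x, EMetric.mem_ball_self (by
          rw [ENNReal.div_pos_iff]; exact ⟨hε.ne', by norm_num⟩)⟩
        obtain ⟨k, hk⟩ := hu.exists_mem_open EMetric.isOpen_ball this
        exact ⟨k, hk⟩
      obtain ⟨k, hk⟩ := this
      refine mem_iUnion.2 ⟨k, hx, ?_⟩
      show edist x (u k) ≤ ε / 2
      change edist (u k) x < ε / 2 at hk
      exact le_of_lt (by rwa [edist_comm] at hk)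
    obtain ⟨k, hk⟩ : ∃ k, ¬ (f '' (A' ∩ EMetric.closedBall (u k) (ε / 2))).Countable := by
      by_contra h
      push_neg at h
      apply hA'c
      refine Countable.mono ?_ (Set.countable_iUnion h)
      rw [← Set.image_iUnion]
      exact Set.image_mono hcover
    refine ⟨A' ∩ EMetric.closedBall (u k) (ε / 2), ?_, hk, ?_, ?_, ?_⟩
    · exact ((hA.inter ((hUclosed b).preimage hf)).inter (isClosed_le (continuous_id.edist continuous_const) continuous_const : IsClosed (EMetric.closedBall (u k) (ε/2))))
    · exact fun x hx => hx.1.1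
    · refine le_trans (EMetric.diam_mono Set.inter_subset_right) ?_
      refine le_trans EMetric.diam_closedBall ?_
      rw [ENNReal.mul_div_cancel' (by norm_num) (by norm_num)]
    · rintro y ⟨x, hx, rfl⟩
      exact hx.1.2
  obtain ⟨B₀, h₀⟩ := key (y₀ n) (hy₀.2 _ ((hUopen _).mem_nhds rfl))
  obtain ⟨B₁, h₁⟩ := key (y₁ n) (hy₁.2 _ ((hUopen _).mem_nhds rfl))
  exact ⟨B₀, B₁, ⟨h₀.1, h₀.2.1, h₀.2.2.1, h₀.2.2.2.1⟩, ⟨h₁.1, h₁.2.1, h₁.2.2.1, h₁.2.2.2.1⟩,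
    hUdisj.mono h₀.2.2.2.2 h₁.2.2.2.2⟩

lemma main_construction {X : Type*} [TopologicalSpace X] [PolishSpace X]
    {f : X → ℕ → Bool} (hf : Continuous f) (hrange : ¬ (Set.range f).Countable) :
    ∃ g : (ℕ → Bool) → X, Continuous g ∧ Function.Injective (f ∘ g) := by
  letI := TopologicalSpace.upgradeIsCompletelyMetrizable X
  obtain ⟨u, -, upos', hu⟩ := exists_seq_strictAnti_tendsto' (zero_lt_one' ℝ≥0∞)
  have upos := fun n => (upos' n).1
  have huniv : ¬ (f '' univ).Countable := by rwa [image_univ]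
  let P := {E : Set X // IsClosed E ∧ ¬ (f '' E).Countable}
  choose C0 C1 h0 h1 hdisj using
    fun (E : Set X) (hE : IsClosed E) (hc : ¬ (f '' E).Countable) (ε : ℝ≥0∞) (hε : 0 < ε) =>
      split_lemma hf hE hc hε
  let DP : List Bool → P := fun l => by
    induction' l with a l ih
    · exact ⟨univ, isClosed_univ, huniv⟩
    cases a
    · exact ⟨C0 ih.val ih.property.1 ih.property.2 (u (l.length + 1)) (upos _),
        (h0 _ _ _ _ _).1, (h0 _ _ _ _ _).2.1⟩
    · exact ⟨C1 ih.val ih.property.1 ih.property.2 (u (l.length + 1)) (upos _),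
        (h1 _ _ _ _ _).1, (h1 _ _ _ _ _).2.1⟩
  let D : List Bool → Set X := fun l => (DP l).val
  have hanti : ClosureAntitone D := by
    refine Antitone.closureAntitone ?_ fun l => (DP l).property.1
    intro l a
    cases a
    · exact (h0 _ _ _ _ _).2.2.1
    · exact (h1 _ _ _ _ _).2.2.1
  have hdiam : VanishingDiam D := by
    intro x
    apply tendsto_of_tendsto_of_tendsto_of_le_of_le' tendsto_const_nhds hu
    · simp
    rw [Filter.eventually_atTop]
    refine ⟨1, fun m (hm : 1 ≤ m) => ?_⟩
    rw [Nat.one_le_iff_ne_zero] at hm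
    rcases Nat.exists_eq_succ_of_ne_zero hm with ⟨n, rfl⟩
    dsimp only [D]
    rw [res_succ]
    cases x n
    · convert (show Metric.ediam _ ≤ _ from (h0 _ _ _ _ _).2.2.2) using 2
      · rfl
      rw [res_length]
    · convert (show Metric.ediam _ ≤ _ from (h1 _ _ _ _ _).2.2.2) using 2
      · rfl
      rw [res_length]
  have hnonempty : ∀ l, (D l).Nonempty := by
    intro l
    rcases Set.eq_empty_or_nonempty (D l) with h | h
    · exact absurd (by simp [h] : (f '' D l).Countable) (DP l).property.2
    · exact h
  have hdom : ∀ {x : ℕ → Bool}, x ∈ (inducedMap D).1 := fun {x} => by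
    rw [hanti.map_of_vanishingDiam hdiam hnonempty]
    apply mem_univ
  refine ⟨fun x => (inducedMap D).2 ⟨x, hdom⟩, ?_, ?_⟩
  · exact hdiam.map_continuous.comp (by continuity)
  · intro x y hxy
    simp only [Function.comp_apply] at hxy
    by_contra hne
    classical
    have hex : ∃ m, x m ≠ y m := by
      by_contra h; push_neg at h; exact hne (funext h)
    set n := Nat.find hex with hn
    have hxn : x n ≠ y n := Nat.find_spec hex
    have hres : res x n = res y n :=
      res_eq_res.2 fun m' hm' => by
        have := Nat.find_min hex hm'
        simpa using this
    have hgx : (inducedMap D).2 ⟨x, hdom⟩ ∈ D (x n :: res x n) := by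
      have := map_mem ⟨x, hdom⟩ (n + 1)
      rwa [res_succ] at this
    have hgy : (inducedMap D).2 ⟨y, hdom⟩ ∈ D (y n :: res x n) := by
      have := map_mem ⟨y, hdom⟩ (n + 1)
      rw [res_succ, ← hres] at this
      exact this
    have hmem0 : f ((inducedMap D).2 ⟨x, hdom⟩) ∈ f '' D (x n :: res x n) :=
      Set.mem_image_of_mem f hgx
    have hmem1 : f ((inducedMap D).2 ⟨y, hdom⟩) ∈ f '' D (y n :: res x n) :=
      Set.mem_image_of_mem f hgy
    rw [← hxy] at hmem1
    revert hxn hmem0 hmem1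
    cases hx' : x n <;> cases hy' : y n <;> intro hxn hmem0 hmem1
    · exact hxn rfl
    · exact Set.disjoint_left.1 (hdisj _ _ _ _ _) hmem0 hmem1
    · exact Set.disjoint_left.1 (hdisj _ _ _ _ _) hmem1 hmem0
    · exact hxn rfl

lemma reduction_of_continuous {X : Type*} [TopologicalSpace X] [PolishSpace X]
    (f : X → ℕ → Bool) (hf : Continuous f) (hc : ¬ (Set.range f).Countable) :
    ∃ (φ : (ℕ → Bool) → X) (ψ : (ℕ → Bool) → ℕ → Bool) (D : Set (ℕ → Bool)),
      Continuous φ ∧ ContinuousOn ψ D ∧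
      ∀ x : ℕ → Bool, f (φ x) ∈ D ∧ ψ (f (φ x)) = x := by
  obtain ⟨g, hg, hinj⟩ := main_construction hf hc
  set h : (ℕ → Bool) → ℕ → Bool := f ∘ g with hh
  have hhcont : Continuous h := hf.comp hg
  have hce : IsClosedEmbedding h := hhcont.isClosedEmbedding hinj
  let e := Topology.IsEmbedding.toHomeomorph hce.isEmbedding
  refine ⟨g, Function.invFun h, Set.range h, hg, ?_, fun x => ⟨mem_range_self x, ?_⟩⟩
  · rw [continuousOn_iff_continuous_restrict]
    have hrest : (Set.range h).restrict (Function.invFun h) = fun y => e.symm y := by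
      funext y
      have h1 : h (e.symm y) = (y : ℕ → Bool) :=
        Equiv.apply_ofInjective_symm hinj y
      calc (Set.range h).restrict (Function.invFun h) y = Function.invFun h (h (e.symm y)) := by
            rw [h1]; rfl
        _ = e.symm y := Function.leftInverse_invFun hinj _
    rw [show (Set.range h).domRestrict (Function.invFun h) = _ from hrest]
    exact e.symm.continuous
  · exact Function.leftInverse_invFun hinj x

/-- Baby Solecki dichotomy: every Borel function
`f : 2^ω → 2^ω` either has countable range, or the identity is continuously
reducible to it: there are partial continuous `φ` (total) and `ψ` (defined on a
set `D`) with `ψ (f (φ x)) = x` for all `x`. -/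
theorem stmt8 (f : (ℕ → Bool) → ℕ → Bool) (hf : Measurable f) :
    (Set.range f).Countable ∨
    ∃ (φ ψ : (ℕ → Bool) → ℕ → Bool) (D : Set (ℕ → Bool)),
      Continuous φ ∧ ContinuousOn ψ D ∧
      ∀ x : ℕ → Bool, f (φ x) ∈ D ∧ ψ (f (φ x)) = x := by
  by_cases hc : (Set.range f).Countable
  · exact Or.inl hc
  right
  haveI : PolishSpace (ℕ → Bool) := PolishSpace.mk
  obtain ⟨t', t't, hfc, t'polish⟩ := hf.exists_continuous
  obtain ⟨φ, ψ, D, hφ, hψ, hx⟩ := @reduction_of_continuous (ℕ → Bool) t' t'polish f hfc hc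
  have hφ2 : @Continuous (ℕ → Bool) (ℕ → Bool) Pi.topologicalSpace Pi.topologicalSpace φ := by
    have := @Continuous.comp (ℕ → Bool) (ℕ → Bool) (ℕ → Bool) Pi.topologicalSpace t'
      Pi.topologicalSpace φ id (continuous_id_of_le t't) hφ
    simpa using this
  exact ⟨φ, ψ, D, hφ2, hψ, hx⟩
end

section
/- If $f \colon 2^\omega \to 2^\omega$ is a Borel function whose range is uncountable, then there exists a nonempty perfect set $P \subseteq 2^\omega$ such that the restriction $f \upharpoonright P$ is continuous and injective. -/
open Set Topology Metric Filter MeasureTheory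

lemma condensation {Y : Type*} [TopologicalSpace Y] [SecondCountableTopology Y]
    {S : Set Y} (hS : ¬ S.Countable) :
    ∃ y₀ ∈ S, ∃ y₁ ∈ S, y₀ ≠ y₁ ∧
      (∀ U ∈ 𝓝 y₀, ¬ (S ∩ U).Countable) ∧ (∀ U ∈ 𝓝 y₁, ¬ (S ∩ U).Countable) := by
  classical
  set B0 : Set (Set Y) := {B ∈ TopologicalSpace.countableBasis Y | (S ∩ B).Countable} with hB0
  set K : Set Y := {y ∈ S | ∀ U ∈ 𝓝 y, ¬ (S ∩ U).Countable} with hK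
  have hKunc : ¬ K.Countable := by
    intro hKc
    apply hS
    have hsub : S ⊆ K ∪ ⋃ B ∈ B0, S ∩ B := by
      intro y hy
      by_cases hyK : y ∈ K
      · exact Or.inl hyK
      · right
        have : ¬ ∀ U ∈ 𝓝 y, ¬ (S ∩ U).Countable := fun hc => hyK ⟨hy, hc⟩
        push_neg at this
        obtain ⟨U, hU, hUc⟩ := this
        obtain ⟨B, hB, hyB, hBU⟩ :=
          (TopologicalSpace.isBasis_countableBasis Y).mem_nhds_iff.mp hU
        exact mem_biUnion ⟨hB, hUc.mono (inter_subset_inter_right _ hBU)⟩ ⟨hy, hyB⟩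
    refine Set.Countable.mono hsub (hKc.union ?_)
    refine Set.Countable.biUnion ?_ (fun B hB => hB.2)
    exact ((TopologicalSpace.countable_countableBasis Y).mono (fun B hB => hB.1))
  have hKS : K ⊆ S := fun y hy => hy.1
  have hnt : K.Nontrivial := by
    by_contra hnt
    exact hKunc ((not_nontrivial_iff.mp hnt).countable)
  obtain ⟨y₀, hy₀, y₁, hy₁, hne⟩ := hnt
  exact ⟨y₀, hKS hy₀, y₁, hKS hy₁, hne, hy₀.2, hy₁.2⟩

lemma shrink {X Y : Type*} [MetricSpace X] [SecondCountableTopology X]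
    (π : X → Y) {W : Set X} (hW : IsOpen W) (hunc : ¬ (π '' W).Countable)
    {ε : ℝ} (hε : 0 < ε) :
    ∃ V : Set X, IsOpen V ∧ closure V ⊆ W ∧ ¬ (π '' V).Countable ∧
      EMetric.diam V ≤ ENNReal.ofReal ε := by
  classical
  obtain ⟨D, hDc, hDd⟩ := TopologicalSpace.exists_countable_dense X
  set I : Set (X × ℚ) := {p | p.1 ∈ D ∧ closure (ball p.1 (p.2 : ℝ)) ⊆ W ∧ 2 * (p.2 : ℝ) ≤ ε} with hI
  have hIc : I.Countable := by
    have : I ⊆ D ×ˢ (univ : Set ℚ) := fun p hp => ⟨hp.1, trivial⟩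
    exact (hDc.prod countable_univ).mono this
  have hcover : W ⊆ ⋃ p ∈ I, ball p.1 (p.2 : ℝ) := by
    intro x hx
    obtain ⟨δ, hδ, hball⟩ := Metric.isOpen_iff.mp hW x hx
    set δ' : ℝ := min δ ε with hδ'
    have hδ'pos : 0 < δ' := lt_min hδ hε
    obtain ⟨q, hq0, hq⟩ := exists_rat_btwn (by linarith : (0:ℝ) < δ' / 3)
    have hq0' : (0:ℝ) < q := hq0
    obtain ⟨d, hd, hdx⟩ := hDd.exists_dist_lt x (half_pos hq0')
    refine mem_biUnion (show (d, q) ∈ I from ?_) ?_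
    · refine ⟨hd, ?_, ?_⟩
      · refine subset_trans ?_ hball
        refine subset_trans Metric.closure_ball_subset_closedBall ?_
        intro z hz
        have : dist z x ≤ dist z d + dist d x := dist_triangle z d x
        have hdz : dist z d ≤ q := hz
        have : dist z x < δ := by
          have hdx' : dist d x < q / 2 := by rwa [dist_comm] at hdx
          have hq3 : (q:ℝ) < δ' / 3 := hq
          have : dist z x < q + q / 2 := by linarith [dist_triangle z d x]
          have : dist z x < δ' := by linarith
          exact lt_of_lt_of_le this (min_le_left _ _)
        exact this
      · have hq3 : (q:ℝ) < δ' / 3 := hq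
        have : δ' ≤ ε := min_le_right _ _
        linarith
    · show x ∈ ball d (q:ℝ)
      rw [mem_ball, dist_comm] at *
      calc dist d x < q / 2 := hdx
        _ < q := by linarith
  have : ¬ (⋃ p ∈ I, π '' (ball p.1 (p.2:ℝ))).Countable := by
    intro hc
    apply hunc
    refine hc.mono ?_
    rintro y ⟨x, hx, rfl⟩
    obtain ⟨p, hp, hxp⟩ := mem_iUnion₂.mp (hcover hx)
    exact mem_iUnion₂.mpr ⟨p, hp, mem_image_of_mem _ hxp⟩
  have : ∃ p ∈ I, ¬ (π '' (ball p.1 (p.2:ℝ))).Countable := by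
    by_contra hc
    push_neg at hc
    exact this (Set.Countable.biUnion hIc hc)
  obtain ⟨⟨d, q⟩, hpI, hpunc⟩ := this
  refine ⟨ball d (q:ℝ), isOpen_ball, hpI.2.1, hpunc, ?_⟩
  refine le_trans (EMetric.diam_le ?_) (le_refl _)
  intro x hx y hy
  rw [edist_dist]
  refine ENNReal.ofReal_le_ofReal ?_
  rw [mem_ball] at hx hy
  have h2 : dist x y ≤ 2 * (q:ℝ) := by
    have ht := dist_triangle x d y
    rw [dist_comm d y] at ht
    linarith
  linarith [hpI.2.2]

/-- clopen cylinders in Cantor space -/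
lemma cyl_clopen (y : ℕ → Bool) (n : ℕ) :
    IsClopen {z : ℕ → Bool | ∀ i ≤ n, z i = y i} := by
  have : {z : ℕ → Bool | ∀ i ≤ n, z i = y i}
      = ⋂ i ∈ Finset.range (n+1), {z : ℕ → Bool | z i = y i} := by
    ext z
    simp only [mem_setOf_eq, mem_iInter, Finset.mem_range, Nat.lt_succ_iff]
  rw [this]
  have hper : ∀ i : ℕ, IsClopen {z : ℕ → Bool | z i = y i} := by
    intro i
    have : {z : ℕ → Bool | z i = y i} = (fun z : ℕ → Bool => z i) ⁻¹' {y i} := rfl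
    rw [this]
    exact (isClopen_discrete {y i}).preimage (continuous_apply i)
  exact isClopen_biInter_finset (fun i _ => hper i)

lemma split {X : Type*} [MetricSpace X] [SecondCountableTopology X]
    (π : X → (ℕ → Bool)) (hπ : Continuous π) {U : Set X} (hU : IsOpen U)
    (hunc : ¬ (π '' U).Countable) {ε : ℝ} (hε : 0 < ε) :
    ∃ V : Bool → Set X, (∀ b, IsOpen (V b)) ∧ (∀ b, closure (V b) ⊆ U) ∧
      (∀ b, ¬ (π '' (V b)).Countable) ∧ (∀ b, EMetric.diam (V b) ≤ ENNReal.ofReal ε) ∧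
      Disjoint (closure (π '' V false)) (closure (π '' V true)) := by
  classical
  obtain ⟨y₀, hy₀S, y₁, hy₁S, hne, hc₀, hc₁⟩ := condensation hunc
  obtain ⟨n, hn⟩ : ∃ n, y₀ n ≠ y₁ n := Function.ne_iff.mp hne
  set y : Bool → (ℕ → Bool) := fun b => bif b then y₁ else y₀ with hy
  set C : Bool → Set (ℕ → Bool) := fun b => {z | ∀ i ≤ n, z i = y b i} with hC
  have hCclopen : ∀ b, IsClopen (C b) := fun b => cyl_clopen (y b) n
  have hmemC : ∀ b, y b ∈ C b := fun b i _ => rfl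
  have hCnhds : ∀ b, C b ∈ 𝓝 (y b) := fun b => (hCclopen b).2.mem_nhds (hmemC b)
  have hCdisj : Disjoint (C false) (C true) := by
    rw [Set.disjoint_left]
    intro z hzf hzt
    exact hn ((hzf n le_rfl).symm.trans (hzt n le_rfl))
  set W : Bool → Set X := fun b => U ∩ π ⁻¹' (C b) with hW
  have hWopen : ∀ b, IsOpen (W b) := fun b => hU.inter ((hCclopen b).2.preimage hπ)
  have hWim : ∀ b, π '' (W b) = (π '' U) ∩ C b := by
    intro b
    ext z
    constructor
    · rintro ⟨x, ⟨hxU, hxC⟩, rfl⟩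
      exact ⟨mem_image_of_mem _ hxU, hxC⟩
    · rintro ⟨⟨x, hxU, rfl⟩, hzC⟩
      exact ⟨x, ⟨hxU, hzC⟩, rfl⟩
  have hWunc : ∀ b, ¬ (π '' (W b)).Countable := by
    intro b
    rw [hWim]
    cases b
    · exact hc₀ _ (hCnhds false)
    · exact hc₁ _ (hCnhds true)
  have key : ∀ b, ∃ V : Set X, IsOpen V ∧ closure V ⊆ W b ∧ ¬ (π '' V).Countable ∧
      EMetric.diam V ≤ ENNReal.ofReal ε :=
    fun b => shrink π (hWopen b) (hWunc b) hε
  choose V hVopen hVcl hVunc hVdiam using key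
  have hVsubW : ∀ b, V b ⊆ W b := fun b => subset_closure.trans (hVcl b)
  refine ⟨V, hVopen, fun b => (hVcl b).trans (inter_subset_left), hVunc, hVdiam, ?_⟩
  have him : ∀ b, closure (π '' V b) ⊆ C b := by
    intro b
    refine closure_minimal ?_ (hCclopen b).1
    refine (image_mono (hVsubW b)).trans ?_
    rw [hWim]
    exact inter_subset_right
  exact hCdisj.mono (him false) (him true)

lemma core {X : Type*} [TopologicalSpace X] [PolishSpace X]
    (π : X → (ℕ → Bool)) (hπ : Continuous π) (h : ¬ (Set.range π).Countable) :
    ∃ e : (ℕ → Bool) → X, Continuous e ∧ Function.Injective (π ∘ e) := by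
  classical
  letI := TopologicalSpace.upgradeIsCompletelyMetrizable X
  -- the splitting step as a total function
  have key : ∀ (U : Set X) (n : ℕ), ∃ V : Bool → Set X,
      (IsOpen U ∧ ¬ (π '' U).Countable) →
      ((∀ b, IsOpen (V b)) ∧ (∀ b, closure (V b) ⊆ U) ∧
      (∀ b, ¬ (π '' (V b)).Countable) ∧
      (∀ b, EMetric.diam (V b) ≤ ENNReal.ofReal ((1/2 : ℝ) ^ n)) ∧
      Disjoint (closure (π '' V false)) (closure (π '' V true))) := by
    intro U n
    by_cases hU : IsOpen U ∧ ¬ (π '' U).Countable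
    · obtain ⟨V, h1, h2, h3, h4, h5⟩ := split π hπ hU.1 hU.2
        (by positivity : (0:ℝ) < (1/2 : ℝ) ^ n)
      exact ⟨V, fun _ => ⟨h1, h2, h3, h4, h5⟩⟩
    · exact ⟨fun _ => ∅, fun hc => absurd hc hU⟩
  choose Vf hVf using key
  -- the scheme
  set A : List Bool → Set X := fun l => l.rec univ (fun b l ih => Vf ih l.length b) with hA
  have hAnil : A [] = univ := rfl
  have hAcons : ∀ b l, A (b :: l) = Vf (A l) l.length b := fun b l => rfl
  have good : ∀ l, IsOpen (A l) ∧ ¬ (π '' (A l)).Countable := by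
    intro l
    induction l with
    | nil => exact ⟨isOpen_univ, by rwa [hAnil, image_univ]⟩
    | cons b l ih =>
      rw [hAcons]
      obtain ⟨h1, _, h3, _, _⟩ := hVf (A l) l.length ih
      exact ⟨h1 b, h3 b⟩
  have hanti : CantorScheme.ClosureAntitone A := by
    intro l b
    rw [hAcons]
    exact (hVf (A l) l.length (good l)).2.1 b
  have hnonempty : ∀ l, (A l).Nonempty := by
    intro l
    rcases (A l).eq_empty_or_nonempty with hemp | hne
    · exfalso
      apply (good l).2
      rw [hemp, image_empty]
      exact countable_empty
    · exact hne
  have hdiam : ∀ l b, EMetric.diam (A (b :: l)) ≤ ENNReal.ofReal ((1/2 : ℝ) ^ l.length) := by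
    intro l b
    rw [hAcons]
    exact (hVf (A l) l.length (good l)).2.2.2.1 b
  have hvan : CantorScheme.VanishingDiam A := by
    intro x
    rw [show (fun n : ℕ => ediam (A (PiNat.res x n)))
        = (fun n : ℕ => ediam (A (PiNat.res x n))) from rfl]
    have hlim : Tendsto (fun n : ℕ => ENNReal.ofReal ((1/2 : ℝ) ^ n)) atTop (𝓝 0) := by
      rw [show (0 : ENNReal) = ENNReal.ofReal 0 by simp]
      exact ENNReal.tendsto_ofReal
        (tendsto_pow_atTop_nhds_zero_of_lt_one (by norm_num) (by norm_num))
    have hb : ∀ n : ℕ, ediam (A (PiNat.res x (n+1))) ≤ ENNReal.ofReal ((1/2:ℝ) ^ n) := by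
      intro n
      rw [PiNat.res_succ]
      have := hdiam (PiNat.res x n) (x n)
      rwa [PiNat.res_length] at this
    rw [← tendsto_add_atTop_iff_nat 1]
    exact tendsto_of_tendsto_of_tendsto_of_le_of_le tendsto_const_nhds hlim
      (fun n => zero_le) (fun n => by simpa [PiNat.res_succ] using hb n)
  have hdom : (CantorScheme.inducedMap A).1 = univ :=
    CantorScheme.ClosureAntitone.map_of_vanishingDiam hvan hanti hnonempty
  set e : (ℕ → Bool) → X := fun z => (CantorScheme.inducedMap A).2 ⟨z, by rw [hdom]; trivial⟩
    with he
  have hmem : ∀ z n, e z ∈ A (PiNat.res z n) := by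
    intro z n
    exact CantorScheme.map_mem ⟨z, by rw [hdom]; trivial⟩ n
  refine ⟨e, ?_, ?_⟩
  · exact (hvan.map_continuous).comp (Continuous.subtype_mk continuous_id _)
  · intro z z' hzz
    by_contra hne
    have hex : ∃ n, z n ≠ z' n := Function.ne_iff.mp hne
    set n := Nat.find hex with hn_def
    have hn : z n ≠ z' n := Nat.find_spec hex
    have hres : PiNat.res z n = PiNat.res z' n :=
      PiNat.res_eq_res.mpr (fun m hm => of_not_not (Nat.find_min hex hm))
    have h1 : e z ∈ A (z n :: PiNat.res z n) := by
      rw [← PiNat.res_succ]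
      exact hmem z (n+1)
    have h2 : e z' ∈ A (z' n :: PiNat.res z n) := by
      rw [hres, ← PiNat.res_succ]
      exact hmem z' (n+1)
    have hD : Disjoint (closure (π '' A (false :: PiNat.res z n))) (closure (π '' A (true :: PiNat.res z n))) := by
      rw [hAcons, hAcons]
      exact (hVf (A (PiNat.res z n)) (PiNat.res z n).length (good (PiNat.res z n))).2.2.2.2
    have hD' : Disjoint (closure (π '' A (z n :: PiNat.res z n))) (closure (π '' A (z' n :: PiNat.res z n))) := by
      cases hzn : z n <;> cases hzn' : z' n
      · exact absurd (hzn.trans hzn'.symm) hn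
      · exact hD
      · exact hD.symm
      · exact absurd (hzn.trans hzn'.symm) hn
    apply Set.disjoint_left.mp hD' (subset_closure (mem_image_of_mem π h1))
    have : π (e z') ∈ closure (π '' A (z' n :: PiNat.res z n)) :=
      subset_closure (mem_image_of_mem π h2)
    have hzz' : π (e z) = π (e z') := hzz
    rwa [← hzz'] at this

/-- If a Borel function on Cantor space has uncountable range,
then there is a nonempty perfect set on which it is continuous and injective. -/
theorem stmt9 (f : (ℕ → Bool) → ℕ → Bool) (hf : Measurable f)
    (h : ¬ (Set.range f).Countable) :
    ∃ P : Set (ℕ → Bool), Perfect P ∧ P.Nonempty ∧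
      ContinuousOn f P ∧ Set.InjOn f P := by
  classical
  -- the graph of f is Borel, hence analytic
  set G : Set ((ℕ → Bool) × (ℕ → Bool)) := {p | f p.1 = p.2} with hG
  have hGm : MeasurableSet G := by
    have : G = ⋂ n, {p : (ℕ → Bool) × (ℕ → Bool) | f p.1 n = p.2 n} := by
      ext p
      simp [hG, funext_iff]
    rw [this]
    refine MeasurableSet.iInter fun n => ?_
    exact measurableSet_eq_fun
      ((measurable_pi_apply n).comp (hf.comp measurable_fst))
      ((measurable_pi_apply n).comp measurable_snd)
  haveI : PolishSpace (ℕ → Bool) := by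
    have : TopologicalSpace.IsCompletelyMetrizableSpace (ℕ → Bool) := inferInstance
    infer_instance
  have hGa : AnalyticSet G := hGm.analyticSet
  rw [AnalyticSet_def] at hGa
  rcases hGa with hGe | ⟨σ, hσc, hσr⟩
  · exfalso
    have : (fun _ => false, f fun _ => false) ∈ G := rfl
    rw [hGe] at this
    exact this
  -- the second projection of the graph parametrization
  set π : (ℕ → ℕ) → (ℕ → Bool) := fun x => (σ x).2 with hπ
  have hπc : Continuous π := continuous_snd.comp hσc
  have hπr : Set.range π = Set.range f := by
    ext y
    constructor
    · rintro ⟨x, rfl⟩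
      have : σ x ∈ G := hσr ▸ mem_range_self x
      exact ⟨(σ x).1, this⟩
    · rintro ⟨a, rfl⟩
      have : (a, f a) ∈ Set.range σ := hσr.symm ▸ (show (a, f a) ∈ G from rfl)
      obtain ⟨x, hx⟩ := this
      exact ⟨x, by show (σ x).2 = f a; rw [hx]⟩
  obtain ⟨e, hec, hei⟩ := core π hπc (by rwa [hπr])
  set j : (ℕ → Bool) → (ℕ → Bool) := fun z => (σ (e z)).1 with hj
  have hjc : Continuous j := continuous_fst.comp (hσc.comp hec)
  have hkey : ∀ z, f (j z) = π (e z) := by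
    intro z
    have : σ (e z) ∈ G := hσr ▸ mem_range_self (e z)
    exact this
  have hfj : Function.Injective (f ∘ j) := by
    have : f ∘ j = π ∘ e := funext hkey
    rw [this]
    exact hei
  have hji : Function.Injective j := fun a b hab => hfj (by simp [Function.comp, hab])
  set P : Set (ℕ → Bool) := Set.range j with hP
  have hPc : IsCompact P := isCompact_range hjc
  -- j as a homeomorphism onto P
  set j' : (ℕ → Bool) ≃ P := Equiv.ofBijective (fun z => ⟨j z, mem_range_self z⟩)
    ⟨fun a b hab => hji (congrArg Subtype.val hab), fun ⟨y, z, hz⟩ => ⟨z, Subtype.ext hz⟩⟩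
    with hj'
  have hj'c : Continuous (j' : (ℕ → Bool) → P) := hjc.subtype_mk _
  set H : (ℕ → Bool) ≃ₜ P := hj'c.homeoOfEquivCompactToT2 with hH
  have hHj : ∀ z, ((H z : P) : ℕ → Bool) = j z := fun z => rfl
  refine ⟨P, ⟨hPc.isClosed, ?_⟩, ⟨j (fun _ => false), mem_range_self _⟩, ?_, ?_⟩
  · -- no isolated points
    intro x hx
    obtain ⟨z, rfl⟩ := hx
    rw [accPt_iff_nhds]
    intro U hU
    -- the sequence flipping the k-th coordinate converges to z
    set zs : ℕ → (ℕ → Bool) := fun k => Function.update z k (!(z k)) with hzs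
    have hzsne : ∀ k, zs k ≠ z := by
      intro k hk
      have := congrFun hk k
      simp [hzs, Function.update_self] at this
    have hzst : Tendsto zs atTop (𝓝 z) := by
      rw [tendsto_pi_nhds]
      intro i
      refine tendsto_const_nhds.congr' ?_
      filter_upwards [eventually_gt_atTop i] with k hk
      simp [hzs, Function.update_of_ne (Nat.ne_of_gt hk).symm]
    have : Tendsto (fun k => j (zs k)) atTop (𝓝 (j z)) := (hjc.tendsto z).comp hzst
    obtain ⟨k, hk⟩ := (this.eventually_mem hU).exists
    exact ⟨j (zs k), ⟨hk, mem_range_self _⟩, fun hc => hzsne k (hji hc)⟩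
  · -- continuity on P
    rw [continuousOn_iff_continuous_restrict]
    have : P.domRestrict f = (π ∘ e) ∘ H.symm := by
      funext p
      have h1 : j (H.symm p) = (p : ℕ → Bool) := by
        have := congrArg (Subtype.val) (H.apply_symm_apply p)
        exact this
      show f p = π (e (H.symm p))
      rw [← hkey, h1]
    rw [this]
    exact (hπc.comp hec).comp H.symm.continuous
  · -- injectivity on P
    rintro x ⟨a, rfl⟩ y ⟨b, rfl⟩ hxy
    exact congrArg j (hfj hxy)
end

section
/- Suppose $A \subseteq 2^\omega$ is countably directed for Turing reducibility (every countable subset of $A$ has an upper bound in $A$ under $\leq_T$) and $A$ contains a perfect set. Assume further the coding theorem: for any perfect set $P$, countable dense subset $B \subseteq P$, and real $c$ computing every element of $B$, and for every $x \in 2^\omega$, there exist $y_0,y_1,y_2,y_3 \in P$ with $c \oplus y_0 \oplus y_1 \oplus y_2 \oplus y_3 \geq_T x$. Then $A$ is cofinal in the Turing degrees. -/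
/-- `OracleRecursiveIn g f` : the partial function `f : ℕ →. ℕ` is partial recursive
relative to the oracle `g : ℕ →. ℕ`.  This is the standard inductive definition,
mirroring `Nat.Partrec` with an extra `oracle` constructor. -/
inductive OracleRecursiveIn (g : ℕ →. ℕ) : (ℕ →. ℕ) → Prop
  | oracle : OracleRecursiveIn g g
  | zero : OracleRecursiveIn g (pure 0)
  | succ : OracleRecursiveIn g ↑(Nat.succ)
  | left : OracleRecursiveIn g ↑fun n : ℕ => n.unpair.1
  | right : OracleRecursiveIn g ↑fun n : ℕ => n.unpair.2
  | pair {f h} : OracleRecursiveIn g f → OracleRecursiveIn g h →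
      OracleRecursiveIn g fun n => Nat.pair <$> f n <*> h n
  | comp {f h} : OracleRecursiveIn g f → OracleRecursiveIn g h →
      OracleRecursiveIn g fun n => h n >>= f
  | prec {f h} : OracleRecursiveIn g f → OracleRecursiveIn g h →
      OracleRecursiveIn g (Nat.unpaired fun a n =>
        n.rec (f a) fun y IH => do let i ← IH; h (Nat.pair a (Nat.pair y i)))
  | rfind {f} : OracleRecursiveIn g f →
      OracleRecursiveIn g fun a => Nat.rfind fun n => (fun m => m = 0) <$> f (Nat.pair a n)

/-- View an element of Cantor space as an oracle `ℕ →. ℕ`. -/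
def oracleOf (x : ℕ → Bool) : ℕ →. ℕ := fun n => Part.some (cond (x n) 1 0)

/-- Turing reducibility on Cantor space. -/
def TuringLe (x y : ℕ → Bool) : Prop := OracleRecursiveIn (oracleOf y) (oracleOf x)

/-- Turing equivalence on Cantor space. -/
def TuringEquiv (x y : ℕ → Bool) : Prop := TuringLe x y ∧ TuringLe y x

/-- A real is computable if it is reducible to the trivial oracle. -/
def ComputableReal (x : ℕ → Bool) : Prop := TuringLe x fun _ => false

/-- Turing join of two reals. -/
def tJoin (x y : ℕ → Bool) : ℕ → Bool :=
  fun n => if n % 2 = 0 then x (n / 2) else y (n / 2)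

infixl:70 " ⊕ₜ " => tJoin

/-- The initial segment of length `n` of `x : ℕ → Bool`, as a finite binary string. -/
def initSeg (x : ℕ → Bool) (n : ℕ) : List Bool := List.ofFn fun i : Fin n => x i

/-- A tree on `2^{<ω}` : a set of finite binary strings closed under prefixes. -/
def IsTree (T : Set (List Bool)) : Prop :=
  ∀ σ ∈ T, ∀ τ : List Bool, τ <+: σ → τ ∈ T

/-- A perfect tree: a nonempty tree in which every node has two incomparable extensions. -/
def IsPerfectTree (T : Set (List Bool)) : Prop :=
  IsTree T ∧ T.Nonempty ∧ ∀ σ ∈ T, ∃ τ₁ ∈ T, ∃ τ₂ ∈ T,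
    σ <+: τ₁ ∧ σ <+: τ₂ ∧ ¬τ₁ <+: τ₂ ∧ ¬τ₂ <+: τ₁

/-- The set of infinite paths through a tree. -/
def pathsThrough (T : Set (List Bool)) : Set (ℕ → Bool) :=
  { x | ∀ n, initSeg x n ∈ T }

open Classical in
/-- A coding of a tree `T ⊆ 2^{<ω}` as an element of Cantor space. -/
noncomputable def treeReal (T : Set (List Bool)) : ℕ → Bool :=
  fun n => if ∃ σ ∈ T, Encodable.encode σ = n then true else false

/-- A pointed perfect tree: a perfect tree each of whose paths computes the tree. -/
def IsPointedPerfectTree (T : Set (List Bool)) : Prop :=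
  IsPerfectTree T ∧ ∀ x ∈ pathsThrough T, TuringLe (treeReal T) x

/-- `ComputesOn φ F D` : the partial recursive function `φ` is (the string-level
part of) a Turing functional which is total on every oracle in `D` and computes
`F` there: for every `x ∈ D` and input `n`, some initial segment of `x` makes `φ`
converge to the value `F x n`, and every converging initial segment of `x` yields
that same value. -/
def ComputesOn (φ : ℕ →. ℕ) (F : (ℕ → Bool) → ℕ → Bool) (D : Set (ℕ → Bool)) : Prop :=
  Nat.Partrec φ ∧
  (∀ x ∈ D, ∀ n : ℕ, ∃ k : ℕ,
      φ (Nat.pair (Encodable.encode (initSeg x k)) n) = Part.some (cond (F x n) 1 0)) ∧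
  (∀ x ∈ D, ∀ n k m : ℕ,
      φ (Nat.pair (Encodable.encode (initSeg x k)) n) = Part.some m → m = cond (F x n) 1 0)

theorem OracleRecursiveIn.of_partrec {g f : ℕ →. ℕ} (hf : Nat.Partrec f) : OracleRecursiveIn g f := by
  induction hf with
  | zero => exact .zero
  | succ => exact .succ
  | left => exact .left
  | right => exact .right
  | pair _ _ ih1 ih2 => exact .pair ih1 ih2
  | comp _ _ ih1 ih2 => exact .comp ih1 ih2
  | prec _ _ ih1 ih2 => exact .prec ih1 ih2
  | rfind _ ih => exact .rfind ih

theorem OracleRecursiveIn.trans' {f g h : ℕ →. ℕ} (hf : OracleRecursiveIn g f) (hg : OracleRecursiveIn h g) :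
    OracleRecursiveIn h f := by
  induction hf with
  | oracle => exact hg
  | zero => exact .zero
  | succ => exact .succ
  | left => exact .left
  | right => exact .right
  | pair _ _ ih1 ih2 => exact .pair ih1 ih2
  | comp _ _ ih1 ih2 => exact .comp ih1 ih2
  | prec _ _ ih1 ih2 => exact .prec ih1 ih2
  | rfind _ ih => exact .rfind ih

theorem TuringLe.trans {x y z : ℕ → Bool} (h1 : TuringLe x y) (h2 : TuringLe y z) :
    TuringLe x z := h1.trans' h2

theorem join_turingLe {u v w : ℕ → Bool} (hu : TuringLe u w) (hv : TuringLe v w) :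
    TuringLe (u ⊕ₜ v) w := by
  unfold TuringLe at *
  have hstep : OracleRecursiveIn (oracleOf w)
      (fun n => (↑(fun n : ℕ => n.unpair.1) : ℕ →. ℕ) n >>= oracleOf v) := .comp hv .left
  have hG := OracleRecursiveIn.prec hu hstep
  have hpre : OracleRecursiveIn (oracleOf w) ↑(fun n : ℕ => Nat.pair (n / 2) (n % 2)) :=
    .of_partrec (Partrec.nat_iff.1 (Computable.partrec
      ((Primrec₂.natPair.comp (Primrec.nat_div.comp Primrec.id (Primrec.const 2))
        (Primrec.nat_mod.comp Primrec.id (Primrec.const 2))).to_comp)))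
  have hc := OracleRecursiveIn.comp hG hpre
  have e : oracleOf (u ⊕ₜ v) = fun n =>
      (↑(fun n : ℕ => Nat.pair (n / 2) (n % 2)) : ℕ →. ℕ) n >>=
        Nat.unpaired (fun a n =>
          n.rec (oracleOf u a) fun y IH => do
            let i ← IH
            (↑(fun n : ℕ => n.unpair.1) : ℕ →. ℕ) (Nat.pair a (Nat.pair y i)) >>= oracleOf v) := by
    funext n
    rcases Nat.mod_two_eq_zero_or_one n with h | h <;>
      simp [oracleOf, tJoin, h, Nat.unpaired, Nat.unpair_pair] <;>
      exact (Part.bind_some _ _).symm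
  rw [e]
  exact hc

theorem exists_countable_dense_sub (P : Set (ℕ → Bool)) :
    ∃ B ⊆ P, B.Countable ∧ P ⊆ closure B := by
  obtain ⟨s, hsc, hsd⟩ := TopologicalSpace.exists_countable_dense ↥P
  refine ⟨Subtype.val '' s, by simp [Set.image_subset_iff], hsc.image _, ?_⟩
  intro p hp
  have := hsd ⟨p, hp⟩
  rwa [closure_subtype] at this

/-- If `A ⊆ 2^ω` is countably directed for Turing reducibility
and contains a (nonempty) perfect set, then—assuming the coding theorem—`A` is
cofinal in the Turing degrees. -/
theorem stmt14 (A : Set (ℕ → Bool))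
    (hdir : ∀ B ⊆ A, B.Countable → ∃ x ∈ A, ∀ y ∈ B, TuringLe y x)
    (hperf : ∃ P ⊆ A, Perfect P ∧ P.Nonempty)
    (hcode : ∀ P : Set (ℕ → Bool), Perfect P → P.Nonempty →
      ∀ B ⊆ P, B.Countable → P ⊆ closure B →
      ∀ c : ℕ → Bool, (∀ b ∈ B, TuringLe b c) →
      ∀ x : ℕ → Bool, ∃ y₀ ∈ P, ∃ y₁ ∈ P, ∃ y₂ ∈ P, ∃ y₃ ∈ P,
        TuringLe x (c ⊕ₜ y₀ ⊕ₜ y₁ ⊕ₜ y₂ ⊕ₜ y₃)) :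
    ∀ a : ℕ → Bool, ∃ x ∈ A, TuringLe a x := by
  intro a
  obtain ⟨P, hPA, hPperf, hPne⟩ := hperf
  obtain ⟨B, hBP, hBc, hBd⟩ := exists_countable_dense_sub P
  obtain ⟨c, hcA, hc⟩ := hdir B (hBP.trans hPA) hBc
  obtain ⟨y₀, hy₀, y₁, hy₁, y₂, hy₂, y₃, hy₃, hle⟩ :=
    hcode P hPperf hPne B hBP hBc hBd c hc a
  have hsub : ({c, y₀, y₁, y₂, y₃} : Set (ℕ → Bool)) ⊆ A := by
    intro z hz
    rcases hz with rfl | rfl | rfl | rfl | rfl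
    · exact hcA
    · exact hPA hy₀
    · exact hPA hy₁
    · exact hPA hy₂
    · exact hPA hy₃
  obtain ⟨x, hxA, hx⟩ := hdir _ hsub (Set.toFinite _).countable
  refine ⟨x, hxA, hle.trans ?_⟩
  exact join_turingLe (join_turingLe (join_turingLe (join_turingLe
    (hx c (by simp)) (hx y₀ (by simp))) (hx y₁ (by simp))) (hx y₂ (by simp))) (hx y₃ (by simp))
end
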